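/- Let q, q_d ∈ S² with ⟨q_d, q⟩ > −1, and define d₁Ψ = (1/(√2·√(1 + ⟨q_d, q⟩)))·q × (q × q_d) and d₂Ψ = (1/(√2·√(1 + ⟨q_d, q⟩)))·q_d × (q_d × q) (the differentials of Ψ in its first and second arguments). Then for every v ∈ ℝ³ with ⟨v, q_d⟩ = 0, one has ⟨𝒯(q, q_d)·v, d₁Ψ⟩ = −⟨v, d₂Ψ⟩; that is, the pull-back of d₁Ψ under the transport map equals −d₂Ψ. -/

import Mathlib

open scoped RealInnerProductSpace

/-- Cross product on ℝ³ (as `EuclideanSpace ℝ (Fin 3)`). -/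
noncomputable def cross (a b : EuclideanSpace ℝ (Fin 3)) : EuclideanSpace ℝ (Fin 3) :=
  WithLp.toLp 2 ![a 1 * b 2 - a 2 * b 1, a 2 * b 0 - a 0 * b 2, a 0 * b 1 - a 1 * b 0]

/-- Transport map 𝒯(q, q_d)·v = (q_d × v) × q. -/
noncomputable def transport (q qd v : EuclideanSpace ℝ (Fin 3)) : EuclideanSpace ℝ (Fin 3) :=
  cross (cross qd v) q

/-- Pull-back of d₁Ψ under the transport map equals −d₂Ψ:
for every tangent vector v at q_d, ⟨𝒯(q,q_d)·v, d₁Ψ⟩ = −⟨v, d₂Ψ⟩. -/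
theorem transport_pullback (q qd : EuclideanSpace ℝ (Fin 3))
    (hq : ‖q‖ = 1) (hqd : ‖qd‖ = 1) (h : ⟪qd, q⟫ > -1)
    (d₁Ψ d₂Ψ : EuclideanSpace ℝ (Fin 3))
    (hd₁ : d₁Ψ = (1 / (Real.sqrt 2 * Real.sqrt (1 + ⟪qd, q⟫))) • cross q (cross q qd))
    (hd₂ : d₂Ψ = (1 / (Real.sqrt 2 * Real.sqrt (1 + ⟪qd, q⟫))) • cross qd (cross qd q)) :
    ∀ v : EuclideanSpace ℝ (Fin 3), ⟪v, qd⟫ = 0 →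
      ⟪transport q qd v, d₁Ψ⟫ = -⟪v, d₂Ψ⟫ := by
  intro v hv
  have hq1 : ⟪q, q⟫ = 1 := by
    rw [real_inner_self_eq_norm_sq, hq]; norm_num
  set c : ℝ := 1 / (Real.sqrt 2 * Real.sqrt (1 + ⟪qd, q⟫)) with hc
  simp only [PiLp.inner_apply, RCLike.inner_apply, conj_trivial, Fin.sum_univ_three] at hq1 hv ⊢
  subst hd₁ hd₂
  simp only [transport, cross, PiLp.smul_apply, smul_eq_mul, PiLp.toLp_apply,
    Matrix.cons_val_zero, Matrix.cons_val_one, Matrix.head_cons,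
    Matrix.cons_val_two, Matrix.tail_cons]
  ring_nf
  linear_combination (c * ((qd 0 ^ 2 + qd 1 ^ 2 + qd 2 ^ 2) * (v 0 * q 0 + v 1 * q 1 + v 2 * q 2)
      - (qd 0 * q 0 + qd 1 * q 1 + qd 2 * q 2) * (v 0 * qd 0 + v 1 * qd 1 + v 2 * qd 2))) * hq1
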